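/- arXiv:1911.06006 — 2 statements merged into one kernel-verified Lean document; each statement's English description precedes it below -/
import Mathlib

section
/- Let $y_1, y_2 \in (0,1)$, $h = \sqrt{y_1+y_2-y_1y_2}$, $x_l, x_r = \frac{y_2(h \mp y_1)^2}{(y_1+y_2)^2}$, $\alpha = y_1/y_2$. Then $\int_{x_l}^{x_r} \frac{(\alpha+1)\sqrt{(x_r-x)(x-x_l)}}{2\pi y_1 x(1-x)}\,dx = 1$, i.e., the limiting spectral distribution of the Beta matrix is a probability density. -/
open Real

set_option maxHeartbeats 1000000 in
lemma key_integral (a b : ℝ) (ha : 0 < a) (hab : a < b) (hb1 : b < 1) :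
    (∫ x in a..b, Real.sqrt ((b - x) * (x - a)) / (x * (1 - x)))
      = π * (1 - Real.sqrt (a * b) - Real.sqrt ((1 - a) * (1 - b))) := by
  have hba : 0 < b - a := sub_pos.2 hab
  have hbne : b - a ≠ 0 := ne_of_gt hba
  have ha1 : a < 1 := hab.trans hb1
  have hb0 : 0 < b := ha.trans hab
  set s := Real.sqrt (a * b) with hs
  set t := Real.sqrt ((1 - a) * (1 - b)) with ht
  have hspos : 0 < s := Real.sqrt_pos.2 (by positivity)
  have htpos : 0 < t := Real.sqrt_pos.2 (by nlinarith)
  have hs2 : s ^ 2 = a * b := Real.sq_sqrt (by positivity)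
  have ht2 : t ^ 2 = (1 - a) * (1 - b) := Real.sq_sqrt (by nlinarith)
  set F : ℝ → ℝ := fun x =>
    arcsin ((2 * x - a - b) / (b - a))
      - s * arcsin (((a + b) * x - 2 * (a * b)) / (x * (b - a)))
      + t * arcsin (((2 - a - b) * (1 - x) - 2 * ((1 - a) * (1 - b))) / ((1 - x) * (b - a)))
    with hF
  have hmain : (∫ x in a..b, Real.sqrt ((b - x) * (x - a)) / (x * (1 - x))) = F b - F a := by
    apply intervalIntegral.integral_eq_sub_of_hasDerivAt_of_le hab.le
    · -- continuity of F on Icc a b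
      apply ContinuousOn.add
      apply ContinuousOn.sub
      · exact Real.continuous_arcsin.comp_continuousOn
          (((continuous_const.mul continuous_id).sub continuous_const |>.sub
            continuous_const |>.div_const (b - a)).continuousOn)
      · refine continuousOn_const.mul (Real.continuous_arcsin.comp_continuousOn ?_)
        refine ContinuousOn.div (by fun_prop) (by fun_prop) ?_
        intro x hx
        have : 0 < x := lt_of_lt_of_le ha hx.1
        positivity
      · refine continuousOn_const.mul (Real.continuous_arcsin.comp_continuousOn ?_)
        refine ContinuousOn.div (by fun_prop) (by fun_prop) ?_
        intro x hx
        have : x < 1 := lt_of_le_of_lt hx.2 hb1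
        have : 0 < 1 - x := by linarith
        positivity
    · -- derivative
      intro x hx
      obtain ⟨hax, hxb⟩ := hx
      have hx0 : 0 < x := ha.trans hax
      have hx1 : x < 1 := hxb.trans hb1
      have hx1' : 0 < 1 - x := by linarith
      set R := Real.sqrt ((b - x) * (x - a)) with hRdef
      have hRpos : 0 < R := Real.sqrt_pos.2 (by nlinarith)
      have hR2 : R ^ 2 = (b - x) * (x - a) := Real.sq_sqrt (by nlinarith)
      -- term 1
      have hwlt : -1 < (2 * x - a - b) / (b - a) := by rw [lt_div_iff₀ hba]; nlinarith
      have hwlt' : (2 * x - a - b) / (b - a) < 1 := by rw [div_lt_iff₀ hba]; nlinarith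
      have hw1 : HasDerivAt (fun x => (2 * x - a - b) / (b - a)) (2 / (b - a)) x := by
        have h0 : HasDerivAt (fun x : ℝ => 2 * x - a - b) 2 x := by
          simpa using (((hasDerivAt_id x).const_mul 2).sub_const a).sub_const b
        simpa using h0.div_const (b - a)
      have hd1 : HasDerivAt (fun y => arcsin ((2 * y - a - b) / (b - a)))
          (1 / Real.sqrt (1 - ((2 * x - a - b) / (b - a)) ^ 2) * (2 / (b - a))) x :=
        by have := (Real.hasDerivAt_arcsin (ne_of_gt hwlt) (ne_of_lt hwlt')).comp x hw1; exact this
      have hsw : Real.sqrt (1 - ((2 * x - a - b) / (b - a)) ^ 2) = 2 * R / (b - a) := by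
        rw [show 1 - ((2 * x - a - b) / (b - a)) ^ 2 = (2 * R / (b - a)) ^ 2 by
          rw [div_pow, div_pow, mul_pow, hR2]; field_simp; ring]
        exact Real.sqrt_sq (by positivity)
      -- term 2
      have hpsq : 1 - (((a + b) * x - 2 * (a * b)) / (x * (b - a))) ^ 2
          = (2 * s * R / (x * (b - a))) ^ 2 := by
        have e : (2 * s * R / (x * (b - a))) ^ 2
            = 4 * (a * b) * ((b - x) * (x - a)) / (x * (b - a)) ^ 2 := by
          rw [div_pow, mul_pow, mul_pow, hs2, hR2]; ring
        rw [e]; field_simp; ring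
      have hppos : (0:ℝ) < (2 * s * R / (x * (b - a))) ^ 2 := by positivity
      have hplt : -1 < ((a + b) * x - 2 * (a * b)) / (x * (b - a)) := by nlinarith [hpsq, hppos]
      have hplt' : ((a + b) * x - 2 * (a * b)) / (x * (b - a)) < 1 := by nlinarith [hpsq, hppos]
      have hp1 : HasDerivAt (fun x => ((a + b) * x - 2 * (a * b)) / (x * (b - a)))
          (((a + b) * (x * (b - a)) - ((a + b) * x - 2 * (a * b)) * (b - a)) / (x * (b - a)) ^ 2)
          x := by
        have hnum : HasDerivAt (fun x : ℝ => (a + b) * x - 2 * (a * b)) (a + b) x := by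
          simpa using ((hasDerivAt_id x).const_mul (a + b)).sub_const (2 * (a * b))
        have hden : HasDerivAt (fun x : ℝ => x * (b - a)) (b - a) x := by
          simpa using (hasDerivAt_id x).mul_const (b - a)
        exact hnum.div hden (by positivity)
      have hd2 : HasDerivAt (fun y => arcsin (((a + b) * y - 2 * (a * b)) / (y * (b - a))))
          (1 / Real.sqrt (1 - (((a + b) * x - 2 * (a * b)) / (x * (b - a))) ^ 2) *
            (((a + b) * (x * (b - a)) - ((a + b) * x - 2 * (a * b)) * (b - a)) /
              (x * (b - a)) ^ 2)) x :=
        by have := (Real.hasDerivAt_arcsin (ne_of_gt hplt) (ne_of_lt hplt')).comp x hp1; exact this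
      have hsp : Real.sqrt (1 - (((a + b) * x - 2 * (a * b)) / (x * (b - a))) ^ 2)
          = 2 * s * R / (x * (b - a)) := by
        rw [hpsq]; exact Real.sqrt_sq (by positivity)
      -- term 3
      have hqsq : 1 - (((2 - a - b) * (1 - x) - 2 * ((1 - a) * (1 - b))) / ((1 - x) * (b - a))) ^ 2
          = (2 * t * R / ((1 - x) * (b - a))) ^ 2 := by
        have e : (2 * t * R / ((1 - x) * (b - a))) ^ 2
            = 4 * ((1 - a) * (1 - b)) * ((b - x) * (x - a)) / ((1 - x) * (b - a)) ^ 2 := by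
          rw [div_pow, mul_pow, mul_pow, ht2, hR2]; ring
        rw [e]; field_simp; ring
      have hqpos : (0:ℝ) < (2 * t * R / ((1 - x) * (b - a))) ^ 2 := by positivity
      have hqlt : -1 < ((2 - a - b) * (1 - x) - 2 * ((1 - a) * (1 - b))) / ((1 - x) * (b - a)) := by
        nlinarith [hqsq, hqpos]
      have hqlt' : ((2 - a - b) * (1 - x) - 2 * ((1 - a) * (1 - b))) / ((1 - x) * (b - a)) < 1 := by
        nlinarith [hqsq, hqpos]
      have hq1 : HasDerivAt
          (fun x => ((2 - a - b) * (1 - x) - 2 * ((1 - a) * (1 - b))) / ((1 - x) * (b - a)))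
          (((2 - a - b) * (-1) * ((1 - x) * (b - a)) -
              ((2 - a - b) * (1 - x) - 2 * ((1 - a) * (1 - b))) * (-1 * (b - a))) /
            ((1 - x) * (b - a)) ^ 2) x := by
        have hone : HasDerivAt (fun x : ℝ => 1 - x) (-1) x := by
          simpa using (hasDerivAt_id x).const_sub 1
        have hnum : HasDerivAt (fun x : ℝ => (2 - a - b) * (1 - x) - 2 * ((1 - a) * (1 - b)))
            ((2 - a - b) * (-1)) x := (hone.const_mul (2 - a - b)).sub_const _
        have hden : HasDerivAt (fun x : ℝ => (1 - x) * (b - a)) (-1 * (b - a)) x :=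
          hone.mul_const (b - a)
        exact hnum.div hden (by positivity)
      have hd3 : HasDerivAt
          (fun y => arcsin (((2 - a - b) * (1 - y) - 2 * ((1 - a) * (1 - b))) / ((1 - y) * (b - a))))
          (1 / Real.sqrt
              (1 - (((2 - a - b) * (1 - x) - 2 * ((1 - a) * (1 - b))) / ((1 - x) * (b - a))) ^ 2) *
            (((2 - a - b) * (-1) * ((1 - x) * (b - a)) -
                ((2 - a - b) * (1 - x) - 2 * ((1 - a) * (1 - b))) * (-1 * (b - a))) /
              ((1 - x) * (b - a)) ^ 2)) x :=
        by have := (Real.hasDerivAt_arcsin (ne_of_gt hqlt) (ne_of_lt hqlt')).comp x hq1; exact this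
      have hsq : Real.sqrt
          (1 - (((2 - a - b) * (1 - x) - 2 * ((1 - a) * (1 - b))) / ((1 - x) * (b - a))) ^ 2)
          = 2 * t * R / ((1 - x) * (b - a)) := by
        rw [hqsq]; exact Real.sqrt_sq (by positivity)
      -- combine
      have hD := (hd1.sub (hd2.const_mul s)).add (hd3.const_mul t)
      rw [hF]
      convert hD using 1
      · rfl
      rw [hsw, hsp, hsq]
      have hRHS : R / (x * (1 - x)) = ((b - x) * (x - a)) / (x * (1 - x) * R) := by
        rw [← hR2]; field_simp
      rw [hRHS]
      field_simp
      ring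
    · -- integrability
      apply ContinuousOn.intervalIntegrable
      apply ContinuousOn.div (by fun_prop) (by fun_prop)
      intro x hx
      rw [Set.uIcc_of_le hab.le] at hx
      have h1 : 0 < x := lt_of_lt_of_le ha hx.1
      have h2 : x < 1 := lt_of_le_of_lt hx.2 hb1
      have h3 : 0 < 1 - x := by linarith
      positivity
  have n1 : b * (b - a) ≠ 0 := ne_of_gt (mul_pos hb0 hba)
  have n2 : (1 - b) * (b - a) ≠ 0 := ne_of_gt (mul_pos (by linarith) hba)
  have n3 : a * (b - a) ≠ 0 := ne_of_gt (mul_pos ha hba)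
  have n4 : (1 - a) * (b - a) ≠ 0 := ne_of_gt (mul_pos (by linarith) hba)
  rw [hmain, hF]
  simp only
  rw [show (2 * b - a - b) / (b - a) = 1 by rw [div_eq_one_iff_eq hbne]; ring,
      show ((a + b) * b - 2 * (a * b)) / (b * (b - a)) = 1 by
        rw [div_eq_one_iff_eq n1]; ring,
      show ((2 - a - b) * (1 - b) - 2 * ((1 - a) * (1 - b))) / ((1 - b) * (b - a)) = -1 by
        rw [div_eq_iff n2]; ring,
      show (2 * a - a - b) / (b - a) = -1 by
        rw [div_eq_iff hbne]; ring,
      show ((a + b) * a - 2 * (a * b)) / (a * (b - a)) = -1 by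
        rw [div_eq_iff n3]; ring,
      show ((2 - a - b) * (1 - a) - 2 * ((1 - a) * (1 - b))) / ((1 - a) * (b - a)) = 1 by
        rw [div_eq_one_iff_eq n4]; ring,
      Real.arcsin_one, Real.arcsin_neg_one]
  ring

theorem stmt_3 (y1 y2 : ℝ) (hy1 : y1 ∈ Set.Ioo (0:ℝ) 1) (hy2 : y2 ∈ Set.Ioo (0:ℝ) 1) :
    let h := Real.sqrt (y1 + y2 - y1 * y2)
    let xl := y2 * (h - y1) ^ 2 / (y1 + y2) ^ 2
    let xr := y2 * (h + y1) ^ 2 / (y1 + y2) ^ 2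
    let α := y1 / y2
    (∫ x in xl..xr, (α + 1) * Real.sqrt ((xr - x) * (x - xl)) /
        (2 * π * y1 * x * (1 - x))) = 1 := by
  obtain ⟨hy10, hy11⟩ := hy1
  obtain ⟨hy20, hy21⟩ := hy2
  intro h xl xr α
  have hsum : 0 < y1 + y2 := by linarith
  have hh2 : h ^ 2 = y1 + y2 - y1 * y2 := Real.sq_sqrt (by nlinarith)
  have hhpos : 0 < h := Real.sqrt_pos.2 (by nlinarith)
  have hy1h : y1 < h := by nlinarith
  have hy2h : y2 < h := by nlinarith
  have hxl_pos : 0 < xl :=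
    div_pos (mul_pos hy20 (pow_pos (sub_pos.2 hy1h) 2)) (pow_pos hsum 2)
  have hxlr : xl < xr := by
    show y2 * (h - y1) ^ 2 / (y1 + y2) ^ 2 < y2 * (h + y1) ^ 2 / (y1 + y2) ^ 2
    rw [div_lt_div_iff_of_pos_right (pow_pos hsum 2)]
    nlinarith [mul_pos (mul_pos hy20 hhpos) hy10]
  have hxr1 : xr < 1 := by
    show y2 * (h + y1) ^ 2 / (y1 + y2) ^ 2 < 1
    rw [div_lt_one (pow_pos hsum 2)]
    nlinarith [mul_pos hy10 (pow_pos (sub_pos.2 hy2h) 2)]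
  have hint : ∀ x : ℝ, (α + 1) * Real.sqrt ((xr - x) * (x - xl)) /
        (2 * π * y1 * x * (1 - x))
      = ((α + 1) / (2 * π * y1)) * (Real.sqrt ((xr - x) * (x - xl)) / (x * (1 - x))) := by
    intro x
    rw [div_mul_div_comm]
    congr 1
    ring
  simp only [hint]
  rw [intervalIntegral.integral_const_mul, key_integral xl xr hxl_pos hxlr hxr1]
  have hfac1 : (h - y1) * (h + y1) = (1 - y1) * (y1 + y2) := by linear_combination hh2
  have hfac2 : (h - y2) * (h + y2) = (1 - y2) * (y1 + y2) := by linear_combination hh2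
  have h1 : Real.sqrt (xl * xr) = y2 * (1 - y1) / (y1 + y2) := by
    have e : xl * xr = (y2 * (1 - y1) / (y1 + y2)) ^ 2 := by
      show y2 * (h - y1) ^ 2 / (y1 + y2) ^ 2 * (y2 * (h + y1) ^ 2 / (y1 + y2) ^ 2) = _
      rw [div_mul_div_comm,
        show y2 * (h - y1) ^ 2 * (y2 * (h + y1) ^ 2) = y2 ^ 2 * ((h - y1) * (h + y1)) ^ 2 from
          by ring, hfac1, div_pow, div_eq_div_iff (by positivity) (by positivity)]
      ring
    rw [e, Real.sqrt_sq (div_nonneg (mul_nonneg hy20.le (by linarith)) hsum.le)]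
  have h2 : Real.sqrt ((1 - xl) * (1 - xr)) = y1 * (1 - y2) / (y1 + y2) := by
    have e1 : 1 - xl = y1 * (h + y2) ^ 2 / (y1 + y2) ^ 2 := by
      show 1 - y2 * (h - y1) ^ 2 / (y1 + y2) ^ 2 = _
      field_simp
      linear_combination (-(y1 + y2)) * hh2
    have e2 : 1 - xr = y1 * (h - y2) ^ 2 / (y1 + y2) ^ 2 := by
      show 1 - y2 * (h + y1) ^ 2 / (y1 + y2) ^ 2 = _
      field_simp
      linear_combination (-(y1 + y2)) * hh2
    have e : (1 - xl) * (1 - xr) = (y1 * (1 - y2) / (y1 + y2)) ^ 2 := by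
      rw [e1, e2, div_mul_div_comm,
        show y1 * (h + y2) ^ 2 * (y1 * (h - y2) ^ 2) = y1 ^ 2 * ((h - y2) * (h + y2)) ^ 2 from
          by ring, hfac2, div_pow, div_eq_div_iff (by positivity) (by positivity)]
      ring
    rw [e, Real.sqrt_sq (div_nonneg (mul_nonneg hy10.le (by linarith)) hsum.le)]
  rw [h1, h2]
  have hπ : π ≠ 0 := Real.pi_ne_zero
  show (y1 / y2 + 1) / (2 * π * y1) * (π * (1 - y2 * (1 - y1) / (y1 + y2) - y1 * (1 - y2) / (y1 + y2))) = 1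
  field_simp
  ring
end

section
/- Let $h, y_1, y_2 > 0$ with $h^2 = y_1 + y_2 - y_1 y_2$ and $y_2 > 1$ (so $h < y_2$). For $r > 1$, define $g_r(\xi) = \frac{(\xi + \frac{1}{hr})(\xi + \frac{h}{r})}{(\xi + \frac{y_2}{hr})(\xi + \frac{h}{y_2 r})}$. Then $\lim_{r \downarrow 1} \frac{1}{4\pi i}\oint_{|\xi|=1} g_r(\xi)\left(\frac{1}{\xi - \frac{1}{r}} + \frac{1}{\xi + \frac{1}{r}} - \frac{2}{\xi + \frac{h}{y_2 r}}\right) d\xi = 0$. -/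
open Real Complex Filter Topology

set_option maxHeartbeats 4000000 in
private lemma poly_aux (a b c u v ξ A B D E : ℂ)
    (hA : A*((a+c)*(a+b)) = (a+u)*(a+v))
    (hB : B*((c-a)*(b-a)) = (u-a)*(v-a))
    (hD : D*(c-b) = -2*((u-b)*(v-b)))
    (hE : E*((c-a)*(a+c)*(c-b)^2) = -2*(u-c)*(v-c)*(c*b-a^2)) :
    (ξ+u)*(ξ+v)*((ξ+a)*(ξ+b)+(ξ-a)*(ξ+b)-2*((ξ-a)*(ξ+a))) *
      ((a+c)*(a+b)*(c-a)*(b-a)*(c-b)^2)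
    = (A*((ξ+a)*(ξ+b)^2*(ξ+c)) + B*((ξ-a)*(ξ+b)^2*(ξ+c)) +
       (-(A+B+E))*((ξ-a)*(ξ+a)*(ξ+b)*(ξ+c)) + D*((ξ-a)*(ξ+a)*(ξ+c)) +
       E*((ξ-a)*(ξ+a)*(ξ+b)^2)) * ((a+c)*(a+b)*(c-a)*(b-a)*(c-b)^2) := by
  linear_combination
    (-((c-a)*(b-a)*(c-b)^2*((ξ+a)*(ξ+b)^2*(ξ+c) - (ξ-a)*(ξ+a)*(ξ+b)*(ξ+c))))*hA +
    (-((a+c)*(a+b)*(c-b)^2*((ξ-a)*(ξ+b)^2*(ξ+c) - (ξ-a)*(ξ+a)*(ξ+b)*(ξ+c))))*hB +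
    (-((a+c)*(a+b)*(c-a)*(b-a)*(c-b)*((ξ-a)*(ξ+a)*(ξ+c))))*hD +
    (-((a+b)*(b-a)*((ξ-a)*(ξ+a)*(ξ+b)^2 - (ξ-a)*(ξ+a)*(ξ+b)*(ξ+c))))*hE

set_option maxHeartbeats 4000000 in
private lemma pf_aux (a b c u v ξ A B D E : ℂ)
    (h1 : ξ - a ≠ 0) (h2 : ξ + a ≠ 0) (h3 : ξ + b ≠ 0) (h4 : ξ + c ≠ 0)
    (d1 : a + c ≠ 0) (d2 : a + b ≠ 0) (d3 : c - a ≠ 0) (d4 : b - a ≠ 0) (d5 : c - b ≠ 0)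
    (hA : A*((a+c)*(a+b)) = (a+u)*(a+v))
    (hB : B*((c-a)*(b-a)) = (u-a)*(v-a))
    (hD : D*(c-b) = -2*((u-b)*(v-b)))
    (hE : E*((c-a)*(a+c)*(c-b)^2) = -2*(u-c)*(v-c)*(c*b-a^2)) :
    ((ξ+u)*(ξ+v))/((ξ+c)*(ξ+b)) * (1/(ξ-a)+1/(ξ+a)-2/(ξ+b)) =
      A*(ξ-a)⁻¹ + B*(ξ - -a)⁻¹ + (-(A+B+E))*(ξ - -b)⁻¹ + D*((ξ - -b)^(2:ℕ))⁻¹ +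
        E*(ξ - -c)⁻¹ := by
  simp only [sub_neg_eq_add]
  have main2 : (ξ+u)*(ξ+v)*((ξ+a)*(ξ+b)+(ξ-a)*(ξ+b)-2*((ξ-a)*(ξ+a)))
      = A*((ξ+a)*(ξ+b)^2*(ξ+c)) + B*((ξ-a)*(ξ+b)^2*(ξ+c)) +
       (-(A+B+E))*((ξ-a)*(ξ+a)*(ξ+b)*(ξ+c)) + D*((ξ-a)*(ξ+a)*(ξ+c)) +
       E*((ξ-a)*(ξ+a)*(ξ+b)^2) := by
    refine mul_right_cancel₀ ?_ (poly_aux a b c u v ξ A B D E hA hB hD hE)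
    exact mul_ne_zero (mul_ne_zero (mul_ne_zero (mul_ne_zero d1 d2) d3) d4) (pow_ne_zero _ d5)
  have hDξ : (ξ-a)*(ξ+a)*(ξ+b)^2*(ξ+c) ≠ 0 :=
    mul_ne_zero (mul_ne_zero (mul_ne_zero h1 h2) (pow_ne_zero _ h3)) h4
  have hD1 : ((ξ+c)*(ξ+b))*((ξ-a)*((ξ+a)*(ξ+b))) ≠ 0 :=
    mul_ne_zero (mul_ne_zero h4 h3) (mul_ne_zero h1 (mul_ne_zero h2 h3))
  have hS : 1/(ξ-a)+1/(ξ+a)-2/(ξ+b)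
      = ((ξ+a)*(ξ+b)+(ξ-a)*(ξ+b)-2*((ξ-a)*(ξ+a)))/((ξ-a)*((ξ+a)*(ξ+b))) := by
    field_simp
  have hR : A*(ξ-a)⁻¹ + B*(ξ+a)⁻¹ + (-(A+B+E))*(ξ+b)⁻¹ + D*((ξ+b)^(2:ℕ))⁻¹ + E*(ξ+c)⁻¹
      = (A*((ξ+a)*(ξ+b)^2*(ξ+c)) + B*((ξ-a)*(ξ+b)^2*(ξ+c)) +
       (-(A+B+E))*((ξ-a)*(ξ+a)*(ξ+b)*(ξ+c)) + D*((ξ-a)*(ξ+a)*(ξ+c)) +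
       E*((ξ-a)*(ξ+a)*(ξ+b)^2)) / ((ξ-a)*(ξ+a)*(ξ+b)^2*(ξ+c)) := by
    rw [eq_div_iff hDξ]
    field_simp
  rw [hS, div_mul_div_comm, hR, div_eq_div_iff hD1 hDξ]
  linear_combination ((ξ-a)*(ξ+a)*(ξ+b)^2*(ξ+c)) * main2

private lemma circleIntegral_add' {f g : ℂ → ℂ} {c : ℂ} {R : ℝ}
    (hf : CircleIntegrable f c R) (hg : CircleIntegrable g c R) :
    (∮ z in C(c, R), (f z + g z)) = (∮ z in C(c, R), f z) + ∮ z in C(c, R), g z := by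
  simp only [circleIntegral, smul_add, intervalIntegral.integral_add hf.out hg.out]

theorem stmt_9 (y1 y2 h : ℝ) (hy1 : 0 < y1) (hy2 : 0 < y2) (hh : 0 < h)
    (hh2 : h ^ 2 = y1 + y2 - y1 * y2) (hy2' : 1 < y2) :
    Filter.Tendsto
      (fun r : ℝ =>
        (1 / (4 * (π : ℂ) * Complex.I)) *
          ∮ ξ in C(0, 1),
            ((ξ + 1 / ((h : ℂ) * r)) * (ξ + (h : ℂ) / r)) /
              ((ξ + (y2 : ℂ) / ((h : ℂ) * r)) * (ξ + (h : ℂ) / ((y2 : ℂ) * r))) *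
            (1 / (ξ - 1 / (r : ℂ)) + 1 / (ξ + 1 / (r : ℂ)) -
              2 / (ξ + (h : ℂ) / ((y2 : ℂ) * r))))
      (𝓝[>] (1 : ℝ)) (𝓝 0) := by
  have hy2h : h < y2 := by nlinarith [mul_pos hy1 (sub_pos.mpr hy2'), sq_nonneg (y2 - h), sq_nonneg (y2 + h)]
  have hfrac : (1:ℝ) < y2 / h := (one_lt_div hh).mpr hy2h
  refine Filter.Tendsto.congr' ?_ tendsto_const_nhds
  filter_upwards [Ioo_mem_nhdsGT_of_mem (Set.mem_Ico.mpr ⟨le_rfl, hfrac⟩)] with r hr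
  obtain ⟨hr1, hr2⟩ := hr
  have hr0 : (0:ℝ) < r := lt_trans one_pos hr1
  have hHC : (h:ℂ) ≠ 0 := Complex.ofReal_ne_zero.2 hh.ne'
  have hYC : (y2:ℂ) ≠ 0 := Complex.ofReal_ne_zero.2 hy2.ne'
  have hRC : (r:ℂ) ≠ 0 := Complex.ofReal_ne_zero.2 hr0.ne'
  set u : ℂ := 1 / ((h:ℂ) * (r:ℂ)) with hu_def
  set v : ℂ := (h:ℂ) / (r:ℂ) with hv_def
  set a : ℂ := 1 / (r:ℂ) with ha_def
  set b : ℂ := (h:ℂ) / ((y2:ℂ) * (r:ℂ)) with hb_def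
  set c : ℂ := (y2:ℂ) / ((h:ℂ) * (r:ℂ)) with hc_def
  -- real-cast forms and norms
  have haR : a = ((1/r : ℝ) : ℂ) := by rw [ha_def]; push_cast; ring
  have hbR : b = ((h/(y2*r) : ℝ) : ℂ) := by rw [hb_def]; push_cast; ring
  have hcR : c = ((y2/(h*r) : ℝ) : ℂ) := by rw [hc_def]; push_cast; ring
  have hna : ‖a‖ = 1/r := by
    rw [haR, Complex.norm_real, Real.norm_eq_abs, abs_of_pos (by positivity)]
  have hnb : ‖b‖ = h/(y2*r) := by
    rw [hbR, Complex.norm_real, Real.norm_eq_abs, abs_of_pos (by positivity)]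
  have hnc : ‖c‖ = y2/(h*r) := by
    rw [hcR, Complex.norm_real, Real.norm_eq_abs, abs_of_pos (by positivity)]
  have ha01 : ‖a‖ < 1 := by rw [hna, div_lt_one hr0]; exact hr1
  have hb01 : ‖b‖ < 1 := by rw [hnb, div_lt_one (by positivity)]; nlinarith
  have hc1 : 1 < ‖c‖ := by
    rw [hnc, lt_div_iff₀ (by positivity)]
    have := (lt_div_iff₀ hh).mp hr2
    nlinarith
  -- nonzeroness off the circle
  have hne : ∀ w : ℂ, ‖w‖ ≠ 1 → ∀ ξ ∈ Metric.sphere (0:ℂ) 1, ξ - w ≠ 0 := by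
    intro w hw ξ hξ hzero
    exact hw (sub_eq_zero.mp hzero ▸ mem_sphere_zero_iff_norm.mp hξ)
  have n1 : ∀ ξ ∈ Metric.sphere (0:ℂ) 1, ξ - a ≠ 0 := hne a (ne_of_lt ha01)
  have n2 : ∀ ξ ∈ Metric.sphere (0:ℂ) 1, ξ - -a ≠ 0 :=
    hne (-a) (by rw [norm_neg]; exact ne_of_lt ha01)
  have n3 : ∀ ξ ∈ Metric.sphere (0:ℂ) 1, ξ - -b ≠ 0 :=
    hne (-b) (by rw [norm_neg]; exact ne_of_lt hb01)
  have n4 : ∀ ξ ∈ Metric.sphere (0:ℂ) 1, ξ - -c ≠ 0 :=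
    hne (-c) (by rw [norm_neg]; exact (ne_of_lt hc1).symm)
  -- pairwise denominators
  have d1 : a + c ≠ 0 := by
    rw [haR, hcR, ← Complex.ofReal_add, Complex.ofReal_ne_zero]
    positivity
  have d2 : a + b ≠ 0 := by
    rw [haR, hbR, ← Complex.ofReal_add, Complex.ofReal_ne_zero]
    positivity
  have d3 : c - a ≠ 0 := by
    rw [haR, hcR, ← Complex.ofReal_sub, Complex.ofReal_ne_zero]
    have : y2/(h*r) - 1/r = (y2 - h)/(h*r) := by field_simp
    rw [this]
    exact div_ne_zero (sub_ne_zero.mpr hy2h.ne') (by positivity)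
  have d4 : b - a ≠ 0 := by
    rw [haR, hbR, ← Complex.ofReal_sub, Complex.ofReal_ne_zero]
    have : h/(y2*r) - 1/r = (h - y2)/(y2*r) := by field_simp
    rw [this]
    exact div_ne_zero (sub_ne_zero.mpr hy2h.ne) (by positivity)
  have d5 : c - b ≠ 0 := by
    rw [hbR, hcR, ← Complex.ofReal_sub, Complex.ofReal_ne_zero]
    have : y2/(h*r) - h/(y2*r) = (y2*y2 - h*h)/(h*y2*r) := by field_simp
    rw [this]
    refine div_ne_zero (ne_of_gt ?_) (by positivity)
    nlinarith
  -- coefficients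
  set A : ℂ := (a+u)*(a+v)/((a+c)*(a+b)) with hAdef
  set B : ℂ := (u-a)*(v-a)/((c-a)*(b-a)) with hBdef
  set D : ℂ := -2*((u-b)*(v-b))/(c-b) with hDdef
  have hA : A*((a+c)*(a+b)) = (a+u)*(a+v) := by
    rw [hAdef]; exact div_mul_cancel₀ _ (mul_ne_zero d1 d2)
  have hB : B*((c-a)*(b-a)) = (u-a)*(v-a) := by
    rw [hBdef]; exact div_mul_cancel₀ _ (mul_ne_zero d3 d4)
  have hD : D*(c-b) = -2*((u-b)*(v-b)) := by
    rw [hDdef]; exact div_mul_cancel₀ _ d5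
  have hcb : c*b = a^2 := by
    rw [ha_def, hb_def, hc_def]; field_simp
  have hE : (0:ℂ)*((c-a)*(a+c)*(c-b)^2) = -2*(u-c)*(v-c)*(c*b-a^2) := by
    rw [hcb]; ring
  -- EqOn with partial fractions
  have hEq : Set.EqOn
      (fun ξ : ℂ => ((ξ+u)*(ξ+v))/((ξ+c)*(ξ+b)) * (1/(ξ-a)+1/(ξ+a)-2/(ξ+b)))
      (fun ξ : ℂ => A*(ξ-a)⁻¹ + (B*(ξ - -a)⁻¹ + ((-(A+B))*(ξ - -b)⁻¹ +
        D*(ξ - -b)^(-2:ℤ)))) (Metric.sphere (0:ℂ) 1) := by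
    intro ξ hξ
    have hpf := pf_aux a b c u v ξ A B D 0 (n1 ξ hξ)
      (by rw [← sub_neg_eq_add]; exact n2 ξ hξ)
      (by rw [← sub_neg_eq_add]; exact n3 ξ hξ)
      (by rw [← sub_neg_eq_add]; exact n4 ξ hξ)
      d1 d2 d3 d4 d5 hA hB hD hE
    simp only
    rw [hpf]
    rw [show ((ξ - -b)^(2:ℕ))⁻¹ = (ξ - -b)^(-2:ℤ) by
      rw [show ((-2:ℤ)) = -((2:ℕ):ℤ) by norm_num, zpow_neg, zpow_natCast]]
    ring
  -- integrability of pieces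
  have contsub : ∀ w : ℂ, ContinuousOn (fun ξ : ℂ => ξ - w) (Metric.sphere (0:ℂ) 1) :=
    fun w => (continuous_id.sub continuous_const).continuousOn
  have cont1 : ContinuousOn (fun ξ : ℂ => A*(ξ-a)⁻¹) (Metric.sphere (0:ℂ) 1) :=
    continuousOn_const.mul ((contsub a).inv₀ n1)
  have cont2 : ContinuousOn (fun ξ : ℂ => B*(ξ - -a)⁻¹) (Metric.sphere (0:ℂ) 1) :=
    continuousOn_const.mul ((contsub (-a)).inv₀ n2)
  have cont3 : ContinuousOn (fun ξ : ℂ => (-(A+B))*(ξ - -b)⁻¹) (Metric.sphere (0:ℂ) 1) :=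
    continuousOn_const.mul ((contsub (-b)).inv₀ n3)
  have cont4 : ContinuousOn (fun ξ : ℂ => D*(ξ - -b)^(-2:ℤ)) (Metric.sphere (0:ℂ) 1) :=
    continuousOn_const.mul ((contsub (-b)).zpow₀ (-2) (fun ξ hξ => Or.inl (n3 ξ hξ)))
  have i1 := cont1.circleIntegrable zero_le_one
  have i2 := cont2.circleIntegrable zero_le_one
  have i3 := cont3.circleIntegrable zero_le_one
  have i4 := cont4.circleIntegrable zero_le_one
  have i34 : CircleIntegrable (fun ξ : ℂ => (-(A+B))*(ξ - -b)⁻¹ + D*(ξ - -b)^(-2:ℤ)) 0 1 :=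
    (cont3.add cont4).circleIntegrable zero_le_one
  have i234 : CircleIntegrable (fun ξ : ℂ => B*(ξ - -a)⁻¹ + ((-(A+B))*(ξ - -b)⁻¹ +
      D*(ξ - -b)^(-2:ℤ))) 0 1 :=
    (cont2.add (cont3.add cont4)).circleIntegrable zero_le_one
  -- evaluate the integral
  have key : (∮ ξ in C(0,1),
      ((ξ+u)*(ξ+v))/((ξ+c)*(ξ+b)) * (1/(ξ-a)+1/(ξ+a)-2/(ξ+b))) = 0 := by
    rw [circleIntegral.integral_congr zero_le_one hEq]
    rw [circleIntegral_add' i1 i234, circleIntegral_add' i2 i34, circleIntegral_add' i3 i4]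
    rw [circleIntegral.integral_const_mul, circleIntegral.integral_const_mul,
      circleIntegral.integral_const_mul, circleIntegral.integral_const_mul]
    rw [circleIntegral.integral_sub_inv_of_mem_ball (mem_ball_zero_iff.mpr ha01),
      circleIntegral.integral_sub_inv_of_mem_ball (mem_ball_zero_iff.mpr (by rwa [norm_neg])),
      circleIntegral.integral_sub_inv_of_mem_ball (mem_ball_zero_iff.mpr (by rwa [norm_neg])),
      circleIntegral.integral_sub_zpow_of_ne (by norm_num)]
    ring
  rw [key, mul_zero]
end
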